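/- Let ε ∈ (0,1) and let I ⊆ (0,1) be an open interval of length ε. If n ∈ ℕ satisfies 3/2^{n+1} < ε, then I contains a closed interval good at n; that is, there exists a natural number i < 2^n with [(2i+1)/2^{n+1}, (2i+2)/2^{n+1}] ⊆ I. -/
import Mathlib


/-- if `I = (a,b) ⊆ (0,1)` is an open interval of length `ε` and
`3/2^(n+1) < ε`, then `I` contains a closed interval good at `n`, i.e. an
interval `[(2i+1)/2^(n+1), (2i+2)/2^(n+1)]` with `i < 2^n`. -/
theorem stmt1 (ε : ℝ) (hε : ε ∈ Set.Ioo (0 : ℝ) 1)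
    (a b : ℝ) (hlen : b - a = ε)
    (hI : Set.Ioo a b ⊆ Set.Ioo (0 : ℝ) 1)
    (n : ℕ) (hn : 3 / 2 ^ (n + 1) < ε) :
    ∃ i : ℕ, i < 2 ^ n ∧
      Set.Icc ((2 * i + 1 : ℝ) / 2 ^ (n + 1)) ((2 * i + 2 : ℝ) / 2 ^ (n + 1)) ⊆
        Set.Ioo a b := by
  obtain ⟨hε0, hε1⟩ := hε
  have hab : a < b := by linarith
  obtain ⟨ha0, hb1⟩ := (Set.Ioo_subset_Ioo_iff hab).1 hI
  have hNpos : (0:ℝ) < 2 ^ (n + 1) := by positivity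
  have haN : (0:ℝ) ≤ a * 2 ^ (n + 1) := by positivity
  set m := ⌊a * 2 ^ (n + 1)⌋₊ with hm
  have h1 : (m:ℝ) ≤ a * 2 ^ (n + 1) := Nat.floor_le haN
  have h2 : a * 2 ^ (n + 1) < m + 1 := Nat.lt_floor_add_one _
  -- pick i depending on parity of m
  have key : ∃ i : ℕ, a * 2 ^ (n + 1) < 2 * i + 1 ∧
      ((2 * i + 2 : ℝ)) ≤ a * 2 ^ (n + 1) + 3 := by
    obtain ⟨k, hk | hk⟩ := Nat.even_or_odd' m
    · refine ⟨k, ?_, ?_⟩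
      · have : (m:ℝ) = 2 * k := by exact_mod_cast congrArg (Nat.cast : ℕ → ℝ) hk
        push_cast at this ⊢
        linarith
      · have : (m:ℝ) = 2 * k := by exact_mod_cast congrArg (Nat.cast : ℕ → ℝ) hk
        push_cast at this ⊢
        linarith
    · refine ⟨k + 1, ?_, ?_⟩
      · have : (m:ℝ) = 2 * k + 1 := by exact_mod_cast congrArg (Nat.cast : ℕ → ℝ) hk
        push_cast at this ⊢
        linarith
      · have : (m:ℝ) = 2 * k + 1 := by exact_mod_cast congrArg (Nat.cast : ℕ → ℝ) hk
        push_cast at this ⊢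
        linarith
  obtain ⟨i, hi1, hi2⟩ := key
  have hε' : 3 / 2 ^ (n + 1) < b - a := by linarith
  have hlow : a < (2 * i + 1 : ℝ) / 2 ^ (n + 1) := by
    rw [lt_div_iff₀ hNpos]; linarith
  have hhigh : (2 * i + 2 : ℝ) / 2 ^ (n + 1) < b := by
    rw [div_lt_iff₀ hNpos]
    have h3 : (3:ℝ) / 2 ^ (n+1) * 2 ^ (n+1) = 3 := by field_simp
    nlinarith [mul_lt_mul_of_pos_right hε' hNpos]
  have hiN : i < 2 ^ n := by
    have hb : (2 * i + 2 : ℝ) / 2 ^ (n + 1) < 1 := lt_of_lt_of_le hhigh hb1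
    rw [div_lt_one hNpos] at hb
    have : (2 * i + 2 : ℝ) < 2 * 2 ^ n := by
      rw [pow_succ] at hb; linarith
    have : (i : ℝ) < 2 ^ n := by linarith
    exact_mod_cast this
  exact ⟨i, hiN, Set.Icc_subset_Ioo hlow hhigh⟩
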